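/- The 8×8 complex matrix U₃ = (1/√3)(I₂⊗I₂⊗I₂ + i·σ₁⊗σ₁⊗σ₁ + i·σ₃⊗σ₃⊗σ₃) is unitary and has Schmidt rank exactly 3. -/
import Mathlib


open Matrix Kronecker Complex

/-- The tripartite Schmidt rank of an 8×8 complex matrix, viewed as a matrix on
ℂ² ⊗ ℂ² ⊗ ℂ² via Kronecker products: the least `r` such that
`U = ∑ j, A j ⊗ₖ (B j ⊗ₖ C j)` with 2×2 matrices `A j`, `B j`, `C j`. -/
noncomputable def sr (U : Matrix (Fin 2 × Fin 2 × Fin 2) (Fin 2 × Fin 2 × Fin 2) ℂ) : ℕ :=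
  sInf {r | ∃ A B C : Fin r → Matrix (Fin 2) (Fin 2) ℂ,
    U = ∑ j, A j ⊗ₖ (B j ⊗ₖ C j)}

def S0 : Matrix (Fin 2) (Fin 2) ℂ := !![1, 0; 0, 0]
def S1 : Matrix (Fin 2) (Fin 2) ℂ := !![0, 1; 0, 0]
def S2 : Matrix (Fin 2) (Fin 2) ℂ := !![0, 0; 1, 0]
def S3 : Matrix (Fin 2) (Fin 2) ℂ := !![0, 0; 0, 1]
def σ1 : Matrix (Fin 2) (Fin 2) ℂ := !![0, 1; 1, 0]
def σ2 : Matrix (Fin 2) (Fin 2) ℂ := !![0, -I; I, 0]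
def σ3 : Matrix (Fin 2) (Fin 2) ℂ := !![1, 0; 0, -1]
def I2 : Matrix (Fin 2) (Fin 2) ℂ := 1

noncomputable def U₃ : Matrix (Fin 2 × Fin 2 × Fin 2) (Fin 2 × Fin 2 × Fin 2) ℂ :=
  (Real.sqrt 3 : ℂ)⁻¹ • (I2 ⊗ₖ (I2 ⊗ₖ I2) + I • (σ1 ⊗ₖ (σ1 ⊗ₖ σ1)) + I • (σ3 ⊗ₖ (σ3 ⊗ₖ σ3)))

/-! ### Auxiliary lemmas -/

lemma star_kron {m : Type*} [Fintype m] (A : Matrix (Fin 2) (Fin 2) ℂ) (B : Matrix m m ℂ) :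
    (A ⊗ₖ B)ᴴ = Aᴴ ⊗ₖ Bᴴ := by
  ext ⟨i,j⟩ ⟨k,l⟩
  simp [conjTranspose_apply, kroneckerMap_apply]

lemma s1s1 : σ1 * σ1 = 1 := by
  simp [σ1, Matrix.mul_fin_two]; rw [Matrix.one_fin_two]

lemma s3s3 : σ3 * σ3 = 1 := by
  simp [σ3, Matrix.mul_fin_two]; rw [Matrix.one_fin_two]

lemma s1s3 : σ1 * σ3 = !![0,-1;1,0] := by simp [σ1, σ3, Matrix.mul_fin_two]

lemma s3s1 : σ3 * σ1 = -(!![0,-1;1,0]) := by simp [σ1, σ3, Matrix.mul_fin_two]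

lemma s1H : σ1ᴴ = σ1 := by
  ext i j; fin_cases i <;> fin_cases j <;> simp [σ1]

lemma s3H : σ3ᴴ = σ3 := by
  ext i j; fin_cases i <;> fin_cases j <;> simp [σ3]

lemma neg_kron {m : Type*} (A : Matrix (Fin 2) (Fin 2) ℂ) (B : Matrix m m ℂ) :
    (-A) ⊗ₖ B = -(A ⊗ₖ B) := by
  ext ⟨i,j⟩ ⟨k,l⟩; simp [kroneckerMap_apply]

lemma kron_neg {m : Type*} (A : Matrix (Fin 2) (Fin 2) ℂ) (B : Matrix m m ℂ) :
    A ⊗ₖ (-B) = -(A ⊗ₖ B) := by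
  ext ⟨i,j⟩ ⟨k,l⟩; simp [kroneckerMap_apply]

lemma sqrt3_ne : ((Real.sqrt 3 : ℝ) : ℂ) ≠ 0 := by
  norm_cast; positivity

lemma unit3 : U₃ ∈ Matrix.unitaryGroup (Fin 2 × Fin 2 × Fin 2) ℂ := by
  rw [Matrix.mem_unitaryGroup_iff]
  set Y := σ1 ⊗ₖ (σ1 ⊗ₖ σ1) with hY
  set Z := σ3 ⊗ₖ (σ3 ⊗ₖ σ3) with hZ
  have hX : I2 ⊗ₖ (I2 ⊗ₖ I2) = (1 : Matrix (Fin 2 × Fin 2 × Fin 2) (Fin 2 × Fin 2 × Fin 2) ℂ) := by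
    rw [I2, Matrix.one_kronecker_one, Matrix.one_kronecker_one]
  have hYY : Y * Y = 1 := by
    rw [hY, ← Matrix.mul_kronecker_mul, ← Matrix.mul_kronecker_mul, s1s1,
      Matrix.one_kronecker_one, Matrix.one_kronecker_one]
  have hZZ : Z * Z = 1 := by
    rw [hZ, ← Matrix.mul_kronecker_mul, ← Matrix.mul_kronecker_mul, s3s3,
      Matrix.one_kronecker_one, Matrix.one_kronecker_one]
  have h1 : Y * Z = (!![0,-1;1,0]) ⊗ₖ (!![0,-1;1,0] ⊗ₖ !![0,-1;1,0]) := by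
    rw [hY, hZ, ← Matrix.mul_kronecker_mul, ← Matrix.mul_kronecker_mul, s1s3]
  have h2 : Z * Y = (-(!![0,-1;1,0])) ⊗ₖ ((-(!![0,-1;1,0])) ⊗ₖ (-(!![0,-1;1,0]))) := by
    rw [hZ, hY, ← Matrix.mul_kronecker_mul, ← Matrix.mul_kronecker_mul, s3s1]
  have hZY : Z * Y = -(Y * Z) := by
    rw [h1, h2]; simp only [neg_kron, kron_neg, neg_neg]
  have hYH : Yᴴ = Y := by
    rw [hY, star_kron, star_kron, s1H]
  have hZH : Zᴴ = Z := by
    rw [hZ, star_kron, star_kron, s3H]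
  have hstar : star U₃ = (Real.sqrt 3 : ℂ)⁻¹ • (1 - I • Y - I • Z) := by
    show U₃ᴴ = _
    rw [U₃, hX]
    rw [Matrix.conjTranspose_smul, Matrix.conjTranspose_add, Matrix.conjTranspose_add,
      Matrix.conjTranspose_one, Matrix.conjTranspose_smul, Matrix.conjTranspose_smul,
      hYH, hZH]
    simp [Complex.conj_I, sub_eq_add_neg]
  rw [hstar, U₃, hX, Matrix.smul_mul, Matrix.mul_smul, smul_smul]
  have hexp : (1 + I • Y + I • Z) * (1 - I • Y - I • Z) = (3:ℂ) • 1 := by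
    simp only [mul_sub, add_mul, sub_mul, Matrix.smul_mul, Matrix.mul_smul, one_mul, mul_one,
      hYY, hZZ, hZY, smul_smul, Complex.I_mul_I, smul_neg]
    module
  rw [hexp, smul_smul]
  have h3 : (Real.sqrt 3 : ℂ) * (Real.sqrt 3 : ℂ) = 3 := by
    norm_cast
    rw [Real.mul_self_sqrt]; norm_num
  rw [show ((Real.sqrt 3 : ℂ)⁻¹ * (Real.sqrt 3 : ℂ)⁻¹ * 3) = 1 by
    field_simp [sqrt3_ne]; linear_combination -h3]
  simp

lemma no_rank2 (A B C : Fin 2 → Matrix (Fin 2) (Fin 2) ℂ)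
    (hU : U₃ = ∑ j, A j ⊗ₖ (B j ⊗ₖ C j)) : False := by
  have E1 := congrFun (congrFun hU (0,0,0)) (0,0,0)
  have E2 := congrFun (congrFun hU (0,0,1)) (0,0,1)
  have E4 := congrFun (congrFun hU (0,0,0)) (1,0,0)
  have E5 := congrFun (congrFun hU (0,0,1)) (1,0,1)
  have E6 := congrFun (congrFun hU (0,0,0)) (1,1,1)
  have E7 := congrFun (congrFun hU (1,0,0)) (1,0,0)
  have E8 := congrFun (congrFun hU (1,0,1)) (1,0,1)
  simp only [U₃, I2, σ1, σ3, Matrix.sum_apply, Fin.sum_univ_two, Matrix.kroneckerMap_apply,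
    Matrix.one_apply, Matrix.smul_apply, Matrix.add_apply] at E1 E2 E4 E5 E6 E7 E8
  norm_num at E1 E2 E4 E5 E6 E7 E8
  set c : ℂ := ((Real.sqrt 3 : ℝ) : ℂ)⁻¹ with hcdef
  have hc : c ≠ 0 := inv_ne_zero sqrt3_ne
  set x0 := A 0 0 0; set x1 := A 1 0 0
  set y0 := A 0 0 1; set y1 := A 1 0 1
  set z0 := A 0 1 1; set z1 := A 1 1 1
  set p0 := B 0 0 0 * C 0 0 0; set p1 := B 1 0 0 * C 1 0 0
  set q0 := B 0 0 0 * C 0 1 1; set q1 := B 1 0 0 * C 1 1 1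
  set s0 := B 0 0 1 * C 0 0 1; set s1 := B 1 0 1 * C 1 0 1
  by_cases hd : p0 * q1 - p1 * q0 = 0
  · -- main contradiction: (1+I)² = (1−I)²
    have h18 := congrArg₂ (· * ·) E1 E8
    have h27 := congrArg₂ (· * ·) E2 E7
    have main : (p0 * q1 - p1 * q0) * (x0 * z1 - x1 * z0)
        = c * (1 + I) * (c * (1 + I)) - c * (1 - I) * (c * (1 - I)) := by
      linear_combination h27 - h18
    rw [hd, zero_mul] at main
    have h4 : c * c * (4 * I) = 0 := by linear_combination -main
    simp [mul_eq_zero, hc, Complex.I_ne_zero] at h4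
  · -- then y = 0, contradicting E6
    have hy0 : (p0 * q1 - p1 * q0) * y0 = 0 := by linear_combination p1 * E5 - q1 * E4
    have hy1 : (p0 * q1 - p1 * q0) * y1 = 0 := by linear_combination q0 * E4 - p0 * E5
    have hy0' : y0 = 0 := by
      rcases mul_eq_zero.1 hy0 with h | h
      · exact absurd h hd
      · exact h
    have hy1' : y1 = 0 := by
      rcases mul_eq_zero.1 hy1 with h | h
      · exact absurd h hd
      · exact h
    rw [hy0', hy1'] at E6
    simp [mul_eq_zero, hc, Complex.I_ne_zero] at E6

lemma lower_bound (r : ℕ) (A B C : Fin r → Matrix (Fin 2) (Fin 2) ℂ)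
    (hU : U₃ = ∑ j, A j ⊗ₖ (B j ⊗ₖ C j)) : 3 ≤ r := by
  by_contra h
  push_neg at h
  have hr2 : r ≤ 2 := by omega
  set G : Fin r → Matrix (Fin 2 × Fin 2 × Fin 2) (Fin 2 × Fin 2 × Fin 2) ℂ :=
    fun j => A j ⊗ₖ (B j ⊗ₖ C j) with hG
  apply no_rank2 (fun j => if h : (j:ℕ) < r then A ⟨j,h⟩ else 0)
    (fun j => if h : (j:ℕ) < r then B ⟨j,h⟩ else 0)
    (fun j => if h : (j:ℕ) < r then C ⟨j,h⟩ else 0)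
  rw [hU]
  have key : ∀ j : Fin 2,
      (if h : (j:ℕ) < r then A ⟨j,h⟩ else 0) ⊗ₖ
        ((if h : (j:ℕ) < r then B ⟨j,h⟩ else 0) ⊗ₖ (if h : (j:ℕ) < r then C ⟨j,h⟩ else 0))
      = if h : (j:ℕ) < r then G ⟨j,h⟩ else 0 := by
    intro j
    by_cases h : (j:ℕ) < r <;> simp [h, hG, Matrix.zero_kronecker]
  calc ∑ j : Fin r, A j ⊗ₖ (B j ⊗ₖ C j)
      = ∑ n ∈ Finset.range r, (if h : n < r then G ⟨n,h⟩ else 0) := by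
        rw [← Fin.sum_univ_eq_sum_range (fun n => if h : n < r then G ⟨n,h⟩ else 0) r]
        exact Finset.sum_congr rfl fun j _ => by simp [hG, j.is_lt]
    _ = ∑ n ∈ Finset.range 2, (if h : n < r then G ⟨n,h⟩ else 0) := by
        refine Finset.sum_subset (Finset.range_subset_range.2 hr2) ?_
        intro x _ hx
        rw [dif_neg (by simpa using hx)]
    _ = ∑ j : Fin 2, (if h : (j:ℕ) < r then A ⟨j,h⟩ else 0) ⊗ₖ
          ((if h : (j:ℕ) < r then B ⟨j,h⟩ else 0) ⊗ₖ (if h : (j:ℕ) < r then C ⟨j,h⟩ else 0)) := by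
        rw [← Fin.sum_univ_eq_sum_range (fun n => if h : n < r then G ⟨n,h⟩ else 0) 2]
        exact Finset.sum_congr rfl fun j _ => (key j).symm

lemma mem3 : (3:ℕ) ∈ {r | ∃ A B C : Fin r → Matrix (Fin 2) (Fin 2) ℂ,
    U₃ = ∑ j, A j ⊗ₖ (B j ⊗ₖ C j)} := by
  refine ⟨![(Real.sqrt 3 : ℂ)⁻¹ • I2, ((Real.sqrt 3 : ℂ)⁻¹ * I) • σ1,
    ((Real.sqrt 3 : ℂ)⁻¹ * I) • σ3], ![I2, σ1, σ3], ![I2, σ1, σ3], ?_⟩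
  rw [Fin.sum_univ_three]
  simp only [Matrix.cons_val_zero, Matrix.cons_val_one, Matrix.head_cons,
    Matrix.cons_val_two, Matrix.tail_cons, Matrix.smul_kronecker]
  rw [U₃]
  module

theorem stmt3 : U₃ ∈ Matrix.unitaryGroup (Fin 2 × Fin 2 × Fin 2) ℂ ∧ sr U₃ = 3 := by
  refine ⟨unit3, ?_⟩
  rw [sr]
  refine le_antisymm (Nat.sInf_le mem3) (le_csInf ⟨3, mem3⟩ ?_)
  rintro n ⟨A, B, C, hU⟩
  exact lower_bound n A B C hU
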